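/- arXiv:0709.4643 — 2 statements merged into one kernel-verified Lean document; each statement's English description precedes it below -/
import Mathlib

section
/- Let T > 0, ε > 0, λ ∈ [0, 1], and let z : [0, T] → ℝ² be continuous and satisfy z(t) = Ω(T, 0, z(T)) + ε ∫₀^{λt+(1−λ)T} Φ(τ, z(τ)) dτ for all t ∈ [0, T]. Let S ⊂ ℝ² be a convex set containing the range of z, and let M, M', L', L'' ≥ 0 be such that for all t ∈ [0, T] and all ξ, ξ' ∈ S: ‖Φ(t, ξ)‖ ≤ M, ‖Φ(t, ξ) − Φ(t, ξ')‖ ≤ M' ‖ξ − ξ'‖, ‖Ω'₍₃₎(T, 0, ξ)‖ ≤ L', and ‖Ω''₍₃₎₍₃₎(T, 0, ξ)‖ ≤ L''. If t₀ ∈ [0, T] satisfies z(t₀) = Ω(T, 0, z(t₀)), then, with α = λ t₀ + (1−λ) T, ‖η(T, α, z(t₀)) − η(0, α, z(t₀))‖ ≤ ε T² M (M' + √2 · M · L'' + M' · L'). (case-(15) estimate in the proof of Theorem 1) -/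
open Set Metric MeasureTheory intervalIntegral Filter
open scoped Interval

local notation "E2" => EuclideanSpace ℝ (Fin 2)

section Aux
variable {ψ : E2 → E2}

/-- Global uniqueness for the autonomous C² field. -/
lemma eta15_uniq (hψ : ContDiff ℝ 2 ψ) {f g : ℝ → E2}
    (hf : ∀ t, HasDerivAt f (ψ (f t)) t) (hg : ∀ t, HasDerivAt g (ψ (g t)) t)
    {t₁ : ℝ} (h0 : f t₁ = g t₁) : ∀ t, f t = g t := by
  have hfc : Continuous f := by
    rw [continuous_iff_continuousAt]; exact fun t => (hf t).continuousAt
  have hgc : Continuous g := by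
    rw [continuous_iff_continuousAt]; exact fun t => (hg t).continuousAt
  have hset : {t : ℝ | f t = g t} = univ := by
    apply IsClopen.eq_univ _ ⟨t₁, h0⟩
    constructor
    · exact isClosed_eq hfc hgc
    · rw [isOpen_iff_mem_nhds]
      intro t₂ ht₂
      obtain ⟨K, U, hU, hlip⟩ :=
        ((hψ.contDiffAt).of_le (by norm_num)).exists_lipschitzOnWith (x := f t₂)
      have hfe : ∀ᶠ t in nhds t₂, HasDerivAt f (ψ (f t)) t ∧ f t ∈ U :=
        (Filter.Eventually.of_forall (fun t => hf t)).and (hfc.continuousAt.preimage_mem_nhds hU)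
      have hge : ∀ᶠ t in nhds t₂, HasDerivAt g (ψ (g t)) t ∧ g t ∈ U := by
        refine (Filter.Eventually.of_forall (fun t => hg t)).and
          (hgc.continuousAt.preimage_mem_nhds ?_)
        rwa [show g t₂ = f t₂ from ht₂.symm]
      have := ODE_solution_unique_of_eventually (v := fun _ x => ψ x) (s := fun _ => U)
        (Filter.Eventually.of_forall fun _ => hlip) hfe hge ht₂
      exact this
  intro t
  have : t ∈ {t : ℝ | f t = g t} := by rw [hset]; trivial
  exact this

end Aux

section Flow
variable {ψ : E2 → E2} {Ω : ℝ → ℝ → E2 → E2}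
  (hψ : ContDiff ℝ 2 ψ)
  (hΩinit : ∀ t₀ ξ, Ω t₀ t₀ ξ = ξ)
  (hΩsol : ∀ t₀ ξ t, HasDerivAt (fun s => Ω s t₀ ξ) (ψ (Ω t t₀ ξ)) t)

include hψ hΩinit hΩsol

/-- group property -/
lemma eta15_group (s t₀ : ℝ) (ξ : E2) (t : ℝ) : Ω t s (Ω s t₀ ξ) = Ω t t₀ ξ :=
  eta15_uniq hψ (hΩsol s (Ω s t₀ ξ)) (hΩsol t₀ ξ) (by rw [hΩinit]) t

/-- autonomy -/
lemma eta15_auto (t₀ : ℝ) (ξ : E2) (t : ℝ) : Ω t t₀ ξ = Ω (t - t₀) 0 ξ := by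
  refine eta15_uniq hψ (hΩsol t₀ ξ) (f := fun t => Ω t t₀ ξ)
    (g := fun t => Ω (t - t₀) 0 ξ) (fun t => ?_) (t₁ := t₀) (by simp [hΩinit]) t
  have h1 : HasDerivAt (fun u : ℝ => u - t₀) 1 t := (hasDerivAt_id t).sub_const t₀
  have := (hΩsol 0 ξ (t - t₀)).scomp t h1
  simpa [Function.comp_def] using this

/-- two-sided inverses of the flow -/
lemma eta15_inv_right (t : ℝ) (ζ : E2) : Ω t 0 (Ω 0 t ζ) = ζ := by
  rw [eta15_group hψ hΩinit hΩsol 0 t ζ t, hΩinit]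

lemma eta15_inv_left (t : ℝ) (ξ : E2) : Ω 0 t (Ω t 0 ξ) = ξ := by
  rw [eta15_group hψ hΩinit hΩsol t 0 ξ 0, hΩinit]

end Flow

/-- Grönwall bootstrap: local Lipschitz continuity of the flow, forward time. -/
lemma eta15_bootstrap {χ : E2 → E2} (hχ : ContDiff ℝ 2 χ) {X : ℝ → E2 → E2}
    (hX0 : ∀ ζ, X 0 ζ = ζ)
    (hXsol : ∀ ζ t, HasDerivAt (fun s => X s ζ) (χ (X t ζ)) t)
    (ξ : E2) (b : ℝ) (hb : 0 < b) :
    ∃ δ > 0, ∃ C, 1 ≤ C ∧ ∀ ζ ∈ closedBall ξ δ, ∀ ζ' ∈ closedBall ξ δ, ∀ t ∈ Icc 0 b,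
      ‖X t ζ - X t ζ'‖ ≤ C * ‖ζ - ζ'‖ := by
  have hcont : ∀ ζ, Continuous fun s => X s ζ := fun ζ => by
    rw [continuous_iff_continuousAt]; exact fun t => (hXsol ζ t).continuousAt
  -- compact trajectory of ξ and a working ball W
  obtain ⟨r, hr0, hr⟩ : ∃ r, 0 ≤ r ∧ ((fun t => X t ξ) '' Icc 0 b) ⊆ closedBall (0 : E2) r := by
    obtain ⟨r, hr⟩ := (isCompact_Icc.image (hcont ξ)).isBounded.subset_closedBall (0 : E2)
    exact ⟨max r 0, le_max_right _ _, hr.trans (closedBall_subset_closedBall (le_max_left _ _))⟩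
  set W : Set E2 := closedBall 0 (r + 2) with hW
  obtain ⟨C₁, hC₁⟩ := (isCompact_closedBall (0 : E2) (r + 2)).exists_bound_of_continuousOn
    ((hχ.continuous_fderiv (by norm_num)).continuousOn (s := W))
  set K : NNReal := (max C₁ 0).toNNReal with hK
  have hKr : (K : ℝ) = max C₁ 0 := Real.coe_toNNReal _ (le_max_right _ _)
  have hχlip : LipschitzOnWith K χ W := by
    apply (convex_closedBall _ _).lipschitzOnWith_of_nnnorm_fderiv_le
      (fun x _ => (hχ.differentiable (by norm_num)).differentiableAt)
    intro x hx
    rw [← NNReal.coe_le_coe, coe_nnnorm, hKr]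
    exact (hC₁ x hx).trans (le_max_left _ _)
  set δ : ℝ := Real.exp (-(K * b)) / 2 with hδ
  have hδpos : 0 < δ := by positivity
  have hδ1 : δ ≤ 1 / 2 := by
    rw [hδ]
    have : Real.exp (-(K * b)) ≤ 1 := Real.exp_le_one_iff.mpr (neg_nonpos.mpr (by positivity))
    linarith
  -- the Grönwall pair estimate, valid as long as trajectories stay in W
  have gron : ∀ (u : ℝ), 0 ≤ u → u ≤ b → ∀ ζ ζ', (∀ s ∈ Ico 0 u, X s ζ ∈ W) →
      (∀ s ∈ Ico 0 u, X s ζ' ∈ W) → ∀ t ∈ Icc 0 u,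
      ‖X t ζ - X t ζ'‖ ≤ ‖ζ - ζ'‖ * Real.exp (K * t) := by
    intro u hu0 hub ζ ζ' hmem hmem' t ht
    have := dist_le_of_trajectories_ODE_of_mem (v := fun _ x => χ x) (s := fun _ => W)
      (fun _ _ => hχlip) ((hcont ζ).continuousOn (s := Icc 0 u))
      (fun s _ => (hXsol ζ s).hasDerivWithinAt) hmem
      ((hcont ζ').continuousOn (s := Icc 0 u))
      (fun s _ => (hXsol ζ' s).hasDerivWithinAt) hmem'
      (le_refl (dist (X 0 ζ) (X 0 ζ'))) t ht
    rw [hX0, hX0] at this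
    simpa [dist_eq_norm, sub_zero] using this
  -- Stage A: trajectories starting in the δ-ball stay 1-close to the trajectory of ξ
  have stageA : ∀ ζ ∈ closedBall ξ δ, ∀ t ∈ Icc 0 b, ‖X t ζ - X t ξ‖ ≤ 1 := by
    intro ζ hζ
    set v : ℝ → E2 := fun t => X t ζ - X t ξ with hv
    have hvc : Continuous v := (hcont ζ).sub (hcont ξ)
    have hv0 : ‖v 0‖ ≤ δ := by
      simp only [hv, hX0]
      simpa [dist_eq_norm] using hζ
    set D : Set ℝ := {t | t ∈ Icc 0 b ∧ ∀ s ∈ Icc 0 t, ‖v s‖ ≤ 1} with hD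
    have h0D : (0:ℝ) ∈ D := by
      refine ⟨⟨le_refl _, hb.le⟩, fun s hs => ?_⟩
      have : s = 0 := le_antisymm hs.2 hs.1
      rw [this]; exact hv0.trans (by linarith)
    have hDbdd : BddAbove D := ⟨b, fun t ht => ht.1.2⟩
    set u : ℝ := sSup D with hu
    have hu0 : 0 ≤ u := le_csSup hDbdd h0D
    have hub : u ≤ b := csSup_le ⟨0, h0D⟩ fun t ht => ht.1.2
    have huD : ∀ s ∈ Icc 0 u, ‖v s‖ ≤ 1 := by
      intro s hs
      rcases lt_or_eq_of_le hs.2 with h | h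
      · obtain ⟨t, htD, hst⟩ := exists_lt_of_lt_csSup ⟨0, h0D⟩ h
        exact htD.2 s ⟨hs.1, hst.le⟩
      · rcases eq_or_lt_of_le hs.1 with h0 | h0
        · rw [← h0]; exact hv0.trans (by linarith)
        · -- s = u > 0 : limit argument
          have hclosed : IsClosed {s : ℝ | ‖v s‖ ≤ 1} :=
            isClosed_le (hvc.norm) continuous_const
          have hsub : Ico 0 u ⊆ {s : ℝ | ‖v s‖ ≤ 1} := by
            intro s' hs'
            obtain ⟨t, htD, hst⟩ := exists_lt_of_lt_csSup ⟨0, h0D⟩ hs'.2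
            exact htD.2 s' ⟨hs'.1, hst.le⟩
          have : Icc 0 u ⊆ {s : ℝ | ‖v s‖ ≤ 1} := by
            rw [← closure_Ico (a := (0:ℝ)) (b := u) (by rw [h] at h0; exact h0.ne)]
            exact hclosed.closure_subset_iff.mpr hsub
          exact this hs
    -- Grönwall on [0, u] gives a strict improvement
    have hWmem : ∀ s ∈ Ico 0 u, X s ξ ∈ W := by
      intro s hs
      apply closedBall_subset_closedBall (by linarith : r ≤ r + 2)
      exact hr ⟨s, ⟨hs.1, hs.2.le.trans hub⟩, rfl⟩
    have hWmem' : ∀ s ∈ Ico 0 u, X s ζ ∈ W := by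
      intro s hs
      have h1 := huD s ⟨hs.1, hs.2.le⟩
      have h2 : ‖X s ξ‖ ≤ r := by
        simpa [dist_eq_norm] using hr ⟨s, ⟨hs.1, hs.2.le.trans hub⟩, rfl⟩
      simp only [hW, mem_closedBall, dist_eq_norm, sub_zero]
      calc ‖X s ζ‖ = ‖v s + X s ξ‖ := by simp [hv]
        _ ≤ ‖v s‖ + ‖X s ξ‖ := norm_add_le _ _
        _ ≤ r + 2 := by linarith
    have hgron : ∀ t ∈ Icc 0 u, ‖v t‖ ≤ δ * Real.exp (K * t) := by
      intro t ht
      calc ‖v t‖ ≤ ‖ζ - ξ‖ * Real.exp (K * t) := by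
            have := gron u hu0 hub ζ ξ hWmem' hWmem t ht
            simpa [hv, hX0] using this
        _ ≤ δ * Real.exp (K * t) := by
            apply mul_le_mul_of_nonneg_right _ (Real.exp_nonneg _)
            simpa [dist_eq_norm] using hζ
    have hhalf : ∀ t ∈ Icc 0 u, ‖v t‖ ≤ 1 / 2 := by
      intro t ht
      refine (hgron t ht).trans ?_
      rw [hδ]
      calc Real.exp (-(K * b)) / 2 * Real.exp (K * t)
          = Real.exp (K * t - K * b) / 2 := by rw [div_mul_eq_mul_div, ← Real.exp_add]; ring_nf
        _ ≤ 1 / 2 := by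
            have : Real.exp (K * t - K * b) ≤ 1 := Real.exp_le_one_iff.mpr (by
              have : (K:ℝ) * t ≤ K * b := by
                apply mul_le_mul_of_nonneg_left (ht.2.trans hub) K.coe_nonneg
              linarith)
            linarith
    -- u must equal b
    have hueqb : u = b := by
      by_contra hne
      have hulb : u < b := lt_of_le_of_ne hub hne
      have : ∀ᶠ s in nhds u, ‖v s‖ < 1 := by
        have : ContinuousAt (fun s => ‖v s‖) u := (hvc.norm).continuousAt
        have h12 : ‖v u‖ < 1 := lt_of_le_of_lt (hhalf u ⟨hu0, le_refl _⟩) (by norm_num)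
        exact this.eventually_lt_const h12
      obtain ⟨ε₂, hε₂, hball⟩ := Metric.eventually_nhds_iff.mp this
      set t' : ℝ := min b (u + ε₂ / 2) with ht'
      have ht'u : u < t' := lt_min hulb (by linarith)
      have ht'D : t' ∈ D := by
        refine ⟨⟨hu0.trans ht'u.le, min_le_left _ _⟩, fun s hs => ?_⟩
        rcases le_or_gt s u with h | h
        · exact huD s ⟨hs.1, h⟩
        · apply le_of_lt
          apply hball
          rw [Real.dist_eq, abs_of_pos (by linarith)]
          have : s ≤ u + ε₂ / 2 := hs.2.trans (min_le_right _ _)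
          linarith
      exact absurd (le_csSup hDbdd ht'D) (not_le.mpr ht'u)
    intro t ht
    rw [← hueqb] at ht
    exact huD t ht
  -- Stage B
  refine ⟨δ, hδpos, Real.exp (K * b), Real.one_le_exp (by positivity), ?_⟩
  intro ζ hζ ζ' hζ' t ht
  have hmem : ∀ ρ, ρ ∈ closedBall ξ δ → ∀ s ∈ Ico 0 b, X s ρ ∈ W := by
    intro ρ hρ s hs
    have h1 := stageA ρ hρ s ⟨hs.1, hs.2.le⟩
    have h2 : ‖X s ξ‖ ≤ r := by
      simpa [dist_eq_norm] using hr ⟨s, ⟨hs.1, hs.2.le⟩, rfl⟩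
    simp only [hW, mem_closedBall, dist_eq_norm, sub_zero]
    calc ‖X s ρ‖ = ‖(X s ρ - X s ξ) + X s ξ‖ := by congr 1; abel
      _ ≤ ‖X s ρ - X s ξ‖ + ‖X s ξ‖ := norm_add_le _ _
      _ ≤ r + 2 := by linarith
  have := gron b (by linarith) le_rfl ζ ζ' (hmem ζ hζ) (hmem ζ' hζ') t ht
  refine this.trans ?_
  rw [mul_comm]
  apply mul_le_mul_of_nonneg_right _ (norm_nonneg _)
  exact Real.exp_le_exp.mpr (mul_le_mul_of_nonneg_left ht.2 K.coe_nonneg)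

section Flow2
variable {ψ : E2 → E2} {Ω : ℝ → ℝ → E2 → E2}
  (hψ : ContDiff ℝ 2 ψ)
  (hΩinit : ∀ t₀ ξ, Ω t₀ t₀ ξ = ξ)
  (hΩsol : ∀ t₀ ξ t, HasDerivAt (fun s => Ω s t₀ ξ) (ψ (Ω t t₀ ξ)) t)

include hψ hΩinit hΩsol

/-- Two-sided local Lipschitz continuity of the flow in the initial condition,
uniformly on compact time intervals. -/
lemma eta15_flowLip (ξ : E2) (b : ℝ) (hb : 0 < b) :
    ∃ δ > 0, ∃ C, 1 ≤ C ∧ ∀ ζ ∈ closedBall ξ δ, ∀ ζ' ∈ closedBall ξ δ, ∀ t ∈ Icc (-b) b,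
      ‖Ω t 0 ζ - Ω t 0 ζ'‖ ≤ C * ‖ζ - ζ'‖ := by
  obtain ⟨δ₁, hδ₁, C₁, hC₁, hfor⟩ := eta15_bootstrap hψ (X := fun t ζ => Ω t 0 ζ)
    (fun ζ => hΩinit 0 ζ) (fun ζ t => hΩsol 0 ζ t) ξ b hb
  obtain ⟨δ₂, hδ₂, C₂, hC₂, hback⟩ := eta15_bootstrap hψ.neg (X := fun t ζ => Ω (-t) 0 ζ)
    (fun ζ => by simpa using hΩinit 0 ζ)
    (fun ζ t => by simpa [Function.comp_def] using (hΩsol 0 ζ (-t)).scomp t (hasDerivAt_neg t)) ξ b hb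
  refine ⟨min δ₁ δ₂, lt_min hδ₁ hδ₂, max C₁ C₂, le_trans hC₁ (le_max_left _ _), ?_⟩
  intro ζ hζ ζ' hζ' t ht
  have hζ1 : ζ ∈ closedBall ξ δ₁ := closedBall_subset_closedBall (min_le_left _ _) hζ
  have hζ2 : ζ ∈ closedBall ξ δ₂ := closedBall_subset_closedBall (min_le_right _ _) hζ
  have hζ'1 : ζ' ∈ closedBall ξ δ₁ := closedBall_subset_closedBall (min_le_left _ _) hζ'
  have hζ'2 : ζ' ∈ closedBall ξ δ₂ := closedBall_subset_closedBall (min_le_right _ _) hζ'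
  rcases le_or_gt 0 t with h | h
  · exact (hfor ζ hζ1 ζ' hζ'1 t ⟨h, ht.2⟩).trans
      (mul_le_mul_of_nonneg_right (le_max_left _ _) (norm_nonneg _))
  · have := hback ζ hζ2 ζ' hζ'2 (-t) ⟨by linarith, by linarith [ht.1]⟩
    simp only [neg_neg] at this
    exact this.trans (mul_le_mul_of_nonneg_right (le_max_right _ _) (norm_nonneg _))

/-- Joint continuity of the flow. -/
lemma eta15_jointCont : Continuous fun p : ℝ × E2 => Ω p.1 0 p.2 := by
  rw [continuous_iff_continuousAt]
  rintro ⟨t₁, ζ₁⟩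
  obtain ⟨δ, hδ, C, hC, hlip⟩ := eta15_flowLip hψ hΩinit hΩsol ζ₁ (|t₁| + 1) (by positivity)
  rw [ContinuousAt, tendsto_iff_dist_tendsto_zero]
  have hbound : ∀ᶠ p : ℝ × E2 in nhds (t₁, ζ₁),
      dist (Ω p.1 0 p.2) (Ω t₁ 0 ζ₁) ≤ C * dist p.2 ζ₁ + dist (Ω p.1 0 ζ₁) (Ω t₁ 0 ζ₁) := by
    have hmem : (Icc (-(|t₁| + 1)) (|t₁| + 1)) ×ˢ closedBall ζ₁ δ ∈ nhds (t₁, ζ₁) := by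
      apply prod_mem_nhds
      · exact Icc_mem_nhds (by cases abs_cases t₁ <;> linarith) (by cases abs_cases t₁ <;> linarith)
      · exact closedBall_mem_nhds _ hδ
    filter_upwards [hmem] with p hp
    calc dist (Ω p.1 0 p.2) (Ω t₁ 0 ζ₁)
        ≤ dist (Ω p.1 0 p.2) (Ω p.1 0 ζ₁) + dist (Ω p.1 0 ζ₁) (Ω t₁ 0 ζ₁) := dist_triangle _ _ _
      _ ≤ C * dist p.2 ζ₁ + dist (Ω p.1 0 ζ₁) (Ω t₁ 0 ζ₁) := by
          refine add_le_add ?_ le_rfl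
          rw [dist_eq_norm, dist_eq_norm]
          exact hlip p.2 hp.2 ζ₁ (mem_closedBall_self hδ.le) p.1 hp.1
  have hlim : Filter.Tendsto (fun p : ℝ × E2 => C * dist p.2 ζ₁ + dist (Ω p.1 0 ζ₁) (Ω t₁ 0 ζ₁))
      (nhds (t₁, ζ₁)) (nhds 0) := by
    have h1 : Filter.Tendsto (fun p : ℝ × E2 => C * dist p.2 ζ₁) (nhds (t₁, ζ₁)) (nhds 0) := by
      have := ((continuous_snd.dist (continuous_const (y := ζ₁))).tendsto (t₁, ζ₁)).const_mul C
      simpa using this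
    have hcontt : Continuous fun s : ℝ => Ω s 0 ζ₁ := by
      rw [continuous_iff_continuousAt]; exact fun t => (hΩsol 0 ζ₁ t).continuousAt
    have h2 : Filter.Tendsto (fun p : ℝ × E2 => dist (Ω p.1 0 ζ₁) (Ω t₁ 0 ζ₁))
        (nhds (t₁, ζ₁)) (nhds 0) := by
      have := (((hcontt.comp continuous_fst).dist
        (continuous_const (y := Ω t₁ 0 ζ₁))).tendsto (t₁, ζ₁))
      simpa using this
    simpa using h1.add h2
  exact squeeze_zero' (Filter.Eventually.of_forall fun p => dist_nonneg) hbound hlim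

/-- norm bound for `DΩ` near a point, uniform on a compact time interval -/
lemma eta15_DΩbound
    {DΩ : ℝ → ℝ → E2 → (E2 →L[ℝ] E2)} (hDΩ : ∀ t t₀ ξ, HasFDerivAt (Ω t t₀) (DΩ t t₀ ξ) ξ)
    (ξ : E2) (b : ℝ) (hb : 0 < b) :
    ∃ δ > 0, ∃ C, 1 ≤ C ∧ ∀ ζ ∈ ball ξ δ, ∀ t ∈ Icc (-b) b, ‖DΩ t 0 ζ‖ ≤ C := by
  obtain ⟨δ, hδ, C, hC, hlip⟩ := eta15_flowLip hψ hΩinit hΩsol ξ b hb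
  refine ⟨δ, hδ, C, hC, ?_⟩
  intro ζ hζ t ht
  have hnb : closedBall ξ δ ∈ nhds ζ := by
    apply mem_of_superset (ball_mem_nhds ζ (by linarith [mem_ball.mp hζ] : (0:ℝ) < δ - dist ζ ξ))
    intro x hx
    rw [mem_ball] at hx
    rw [mem_closedBall]
    calc dist x ξ ≤ dist x ζ + dist ζ ξ := dist_triangle _ _ _
      _ ≤ δ := by linarith [mem_ball.mp hζ]
  have hlip' : LipschitzOnWith C.toNNReal (Ω t 0) (closedBall ξ δ) := by
    apply LipschitzOnWith.of_dist_le_mul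
    intro x hx y hy
    rw [dist_eq_norm, dist_eq_norm, Real.coe_toNNReal _ (by linarith)]
    exact hlip x hx y hy t ht
  have := (hDΩ t 0 ζ).le_of_lipschitzOn hnb hlip'
  rwa [Real.coe_toNNReal _ (by linarith)] at this

end Flow2

/-- difference quotients along a vector converge -/
lemma eta15_lim {f : E2 → E2} {L : E2 →L[ℝ] E2} {x : E2} (hf : HasFDerivAt f L x) (v : E2) :
    Filter.Tendsto (fun n : ℕ => ((n : ℝ) + 1) • (f (x + ((n : ℝ) + 1)⁻¹ • v) - f x))
      Filter.atTop (nhds (L v)) := by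
  apply hf.lim v (c := fun n : ℕ => (n : ℝ) + 1)
  have : Filter.Tendsto (fun n : ℕ => (n : ℝ) + 1) Filter.atTop Filter.atTop :=
    Filter.tendsto_atTop_add_const_right _ 1 tendsto_natCast_atTop_atTop
  apply this.congr'
  filter_upwards with n
  rw [Real.norm_eq_abs, abs_of_pos (by positivity)]

/-- decomposition of a continuous linear map on `E2` -/
lemma eta15_clm_decomp (L : E2 →L[ℝ] E2) :
    L = ∑ i : Fin 2, (ContinuousLinearMap.smulRightL ℝ _ _ (EuclideanSpace.proj i))
      (L (EuclideanSpace.single i 1)) := by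
  ext v
  have hv : v = ∑ i : Fin 2, v i • EuclideanSpace.single i (1:ℝ) := by
    apply PiLp.ext
    intro j
    fin_cases j <;>
      simp [EuclideanSpace.single_apply, Fin.sum_univ_two]
  conv_lhs => rw [hv]
  rw [_root_.map_sum]
  simp only [show ∀ (c : E2 →L[ℝ] ℝ) (f : E2),
      ContinuousLinearMap.smulRightL ℝ E2 E2 c f = c.smulRight f from fun _ _ => rfl]
  simp [ContinuousLinearMap.smulRight_apply,
    PiLp.proj_apply, Fin.sum_univ_two, PiLp.smul_apply, smul_eq_mul]

section Meas
variable {Ω : ℝ → ℝ → E2 → E2} {DΩ : ℝ → ℝ → E2 → (E2 →L[ℝ] E2)}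

/-- strong measurability of `s ↦ DΩ s 0 ξ` -/
lemma eta15_measDΩ (hcont : ∀ ζ, Continuous fun s => Ω s 0 ζ)
    (hDΩ : ∀ t t₀ ξ, HasFDerivAt (Ω t t₀) (DΩ t t₀ ξ) ξ) (ξ : E2) :
    StronglyMeasurable fun s => DΩ s 0 ξ := by
  have hv : ∀ v : E2, StronglyMeasurable fun s => DΩ s 0 ξ v := by
    intro v
    apply stronglyMeasurable_of_tendsto (Filter.atTop)
      (f := fun (n : ℕ) (s : ℝ) => ((n : ℝ) + 1) • (Ω s 0 (ξ + ((n : ℝ) + 1)⁻¹ • v) - Ω s 0 ξ))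
    · intro n; exact (((hcont _).sub (hcont ξ)).const_smul ((n : ℝ) + 1)).stronglyMeasurable
    · rw [tendsto_pi_nhds]; intro s; exact eta15_lim (hDΩ s 0 ξ) v
  have hrw : (fun s => DΩ s 0 ξ) = fun s => ∑ i : Fin 2,
      (ContinuousLinearMap.smulRightL ℝ E2 E2 (EuclideanSpace.proj i))
        (DΩ s 0 ξ (EuclideanSpace.single i 1)) := by
    funext s; exact eta15_clm_decomp _
  rw [hrw]
  apply Finset.stronglyMeasurable_fun_sum
  intro i _
  exact (ContinuousLinearMap.smulRightL ℝ E2 E2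
    (EuclideanSpace.proj i)).continuous.comp_stronglyMeasurable (hv _)

/-- strong measurability of `τ ↦ DΩ 0 τ (c τ) (g τ)` for continuous `c`, `g` -/
lemma eta15_measApply (hjoint : Continuous fun p : ℝ × E2 => Ω p.1 0 p.2)
    (hauto : ∀ t t₀ ξ, Ω t t₀ ξ = Ω (t - t₀) 0 ξ)
    (hDΩ : ∀ t t₀ ξ, HasFDerivAt (Ω t t₀) (DΩ t t₀ ξ) ξ)
    {c g : ℝ → E2} (hc : Continuous c) (hg : Continuous g) :
    StronglyMeasurable fun τ => DΩ 0 τ (c τ) (g τ) := by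
  have haux : ∀ (h : ℝ → E2), Continuous h → Continuous fun τ => Ω 0 τ (h τ) := by
    intro h hh
    have : (fun τ => Ω 0 τ (h τ)) = fun τ => Ω (0 - τ) 0 (h τ) := by
      funext τ; rw [hauto 0 τ (h τ)]
    rw [this]
    exact hjoint.comp (Continuous.prodMk (continuous_const.sub continuous_id) hh)
  apply stronglyMeasurable_of_tendsto (Filter.atTop)
    (f := fun (n : ℕ) (τ : ℝ) =>
      ((n : ℝ) + 1) • (Ω 0 τ (c τ + ((n : ℝ) + 1)⁻¹ • g τ) - Ω 0 τ (c τ)))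
  · intro n
    exact (((haux _ (hc.add (hg.const_smul ((n : ℝ) + 1)⁻¹))).sub (haux _ hc)).const_smul ((n : ℝ) + 1)).stronglyMeasurable
  · rw [tendsto_pi_nhds]; intro τ; exact eta15_lim (hDΩ 0 τ (c τ)) (g τ)

end Meas

section Var
variable {ψ : E2 → E2} {Ω : ℝ → ℝ → E2 → E2} {DΩ : ℝ → ℝ → E2 → (E2 →L[ℝ] E2)}
  (hψ : ContDiff ℝ 2 ψ)
  (hΩinit : ∀ t₀ ξ, Ω t₀ t₀ ξ = ξ)
  (hΩsol : ∀ t₀ ξ t, HasDerivAt (fun s => Ω s t₀ ξ) (ψ (Ω t t₀ ξ)) t)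
  (hDΩ : ∀ t t₀ ξ, HasFDerivAt (Ω t t₀) (DΩ t t₀ ξ) ξ)

include hψ hΩinit hΩsol hDΩ

/-- integral form of the variational equation -/
lemma eta15_varInt (ξ : E2) (u : ℝ) :
    DΩ u 0 ξ = ContinuousLinearMap.id ℝ E2 +
      ∫ s in (0:ℝ)..u, (fderiv ℝ ψ (Ω s 0 ξ)).comp (DΩ s 0 ξ) := by
  have hcont : ∀ ζ, Continuous fun s => Ω s 0 ζ := fun ζ => by
    rw [continuous_iff_continuousAt]; exact fun t => (hΩsol 0 ζ t).continuousAt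
  set b : ℝ := |u| + 1 with hb
  have hbpos : 0 < b := by positivity
  obtain ⟨δ, hδ, C, hC, hDb⟩ := eta15_DΩbound hψ hΩinit hΩsol hDΩ ξ b hbpos
  -- compact tube and bound for fderiv ψ on it
  set N : Set E2 := (fun p : ℝ × E2 => Ω p.1 0 p.2) '' ((Icc (-b) b) ×ˢ closedBall ξ (δ/2))
    with hN
  have hNcomp : IsCompact N :=
    (isCompact_Icc.prod (isCompact_closedBall _ _)).image
      (eta15_jointCont hψ hΩinit hΩsol)
  obtain ⟨C₁, hC₁⟩ := hNcomp.exists_bound_of_continuousOn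
    ((hψ.continuous_fderiv (by norm_num)).continuousOn (s := N))
  have hsmem : ∀ s ∈ Ι (0:ℝ) u, s ∈ Icc (-b) b := by
    intro s hs
    rw [Set.mem_uIoc] at hs
    constructor
    · rcases hs with h | h
      · cases abs_cases u <;> linarith [h.1]
      · cases abs_cases u <;> linarith [h.1]
    · rcases hs with h | h
      · cases abs_cases u <;> linarith [h.2]
      · cases abs_cases u <;> linarith [h.2]
  have key := intervalIntegral.hasFDerivAt_integral_of_dominated_of_fderiv_le
    (𝕜 := ℝ) (μ := volume) (a := (0:ℝ)) (b := u) (x₀ := ξ)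
    (F := fun ζ s => ψ (Ω s 0 ζ))
    (F' := fun ζ s => (fderiv ℝ ψ (Ω s 0 ζ)).comp (DΩ s 0 ζ))
    (bound := fun _ => (max C₁ 0) * C) (ball_mem_nhds ξ (half_pos hδ))
    (Filter.Eventually.of_forall fun ζ =>
      ((hψ.continuous.comp (hcont ζ)).aestronglyMeasurable))
    ((hψ.continuous.comp (hcont ξ)).intervalIntegrable 0 u)
    (by
      apply MeasureTheory.AEStronglyMeasurable.restrict
      apply MeasureTheory.StronglyMeasurable.aestronglyMeasurable
      have h1 : Continuous fun s => fderiv ℝ ψ (Ω s 0 ξ) :=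
        (hψ.continuous_fderiv (by norm_num)).comp (hcont ξ)
      exact h1.stronglyMeasurable.mul (eta15_measDΩ hcont hDΩ ξ))
    (Filter.Eventually.of_forall fun s => by
      intro hs ζ hζ
      apply le_trans (ContinuousLinearMap.opNorm_comp_le _ _)
      apply mul_le_mul
      · apply le_trans _ (le_max_left C₁ 0)
        apply hC₁
        exact ⟨(s, ζ), ⟨hsmem s hs, ball_subset_closedBall (ball_subset_ball (by linarith) hζ)⟩, rfl⟩
      · exact hDb ζ (ball_subset_ball (by linarith) hζ) s (hsmem s hs)
      · exact norm_nonneg _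
      · exact le_max_right _ _)
    (intervalIntegrable_const)
    (Filter.Eventually.of_forall fun s => by
      intro hs ζ hζ
      exact ((hψ.differentiable (by norm_num) (Ω s 0 ζ)).hasFDerivAt).comp ζ (hDΩ s 0 ζ))
  have heq : (fun ζ => ∫ s in (0:ℝ)..u, ψ (Ω s 0 ζ)) = fun ζ => Ω u 0 ζ - ζ := by
    funext ζ
    rw [intervalIntegral.integral_eq_sub_of_hasDerivAt
      (fun s _ => hΩsol 0 ζ s) ((hψ.continuous.comp (hcont ζ)).intervalIntegrable 0 u)]
    rw [hΩinit]
  rw [heq] at key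
  have key2 : HasFDerivAt (fun ζ => Ω u 0 ζ - ζ) (DΩ u 0 ξ - ContinuousLinearMap.id ℝ E2) ξ :=
    (hDΩ u 0 ξ).sub (hasFDerivAt_id ξ)
  have h3 : DΩ u 0 ξ - ContinuousLinearMap.id ℝ E2 =
      ∫ s in (0:ℝ)..u, (fderiv ℝ ψ (Ω s 0 ξ)).comp (DΩ s 0 ξ) := key2.unique key
  rw [← h3]
  abel
end Var

section Var2
variable {ψ : E2 → E2} {Ω : ℝ → ℝ → E2 → E2} {DΩ : ℝ → ℝ → E2 → (E2 →L[ℝ] E2)}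
  (hψ : ContDiff ℝ 2 ψ)
  (hΩinit : ∀ t₀ ξ, Ω t₀ t₀ ξ = ξ)
  (hΩsol : ∀ t₀ ξ t, HasDerivAt (fun s => Ω s t₀ ξ) (ψ (Ω t t₀ ξ)) t)
  (hDΩ : ∀ t t₀ ξ, HasFDerivAt (Ω t t₀) (DΩ t t₀ ξ) ξ)

include hψ hΩinit hΩsol hDΩ

/-- the variational equation -/
lemma eta15_varEq (ξ : E2) (t : ℝ) :
    HasDerivAt (fun s => DΩ s 0 ξ) ((fderiv ℝ ψ (Ω t 0 ξ)).comp (DΩ t 0 ξ)) t := by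
  have hcont : ∀ ζ, Continuous fun s => Ω s 0 ζ := fun ζ => by
    rw [continuous_iff_continuousAt]; exact fun t => (hΩsol 0 ζ t).continuousAt
  have hAcont : Continuous fun s => fderiv ℝ ψ (Ω s 0 ξ) :=
    (hψ.continuous_fderiv (by norm_num)).comp (hcont ξ)
  set B : ℝ → (E2 →L[ℝ] E2) := fun s => (fderiv ℝ ψ (Ω s 0 ξ)).comp (DΩ s 0 ξ) with hBdef
  have hBmeas : StronglyMeasurable B :=
    hAcont.stronglyMeasurable.mul (eta15_measDΩ hcont hDΩ ξ)
  have hBloc : ∀ b : ℝ, 0 < b → ∃ Cb, 0 ≤ Cb ∧ ∀ s ∈ Icc (-b) b, ‖B s‖ ≤ Cb := by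
    intro b hb
    obtain ⟨δ, hδ, C, hC, hDb⟩ := eta15_DΩbound hψ hΩinit hΩsol hDΩ ξ b hb
    obtain ⟨C₁, hC₁⟩ := (isCompact_Icc.image (hcont ξ)).exists_bound_of_continuousOn
      ((hψ.continuous_fderiv (by norm_num)).continuousOn
        (s := (fun s => Ω s 0 ξ) '' (Icc (-b) b)))
    refine ⟨max C₁ 0 * C, mul_nonneg (le_max_right _ _) (by linarith), fun s hs => ?_⟩
    apply le_trans (ContinuousLinearMap.opNorm_comp_le _ _)
    apply mul_le_mul
    · exact le_trans (hC₁ _ ⟨s, hs, rfl⟩) (le_max_left _ _)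
    · exact hDb ξ (mem_ball_self hδ) s hs
    · exact norm_nonneg _
    · exact le_max_right _ _
  have habs : ∀ a c s : ℝ, s ∈ Ι a c → s ∈ Icc (-(|a| + |c| + 1)) (|a| + |c| + 1) := by
    intro a c s hs
    rw [Set.mem_uIoc] at hs
    constructor
    · rcases hs with h | h
      · cases abs_cases a <;> cases abs_cases c <;> linarith [h.1]
      · cases abs_cases a <;> cases abs_cases c <;> linarith [h.1]
    · rcases hs with h | h
      · cases abs_cases a <;> cases abs_cases c <;> linarith [h.2]
      · cases abs_cases a <;> cases abs_cases c <;> linarith [h.2]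
  have hBint : ∀ a c : ℝ, IntervalIntegrable B volume a c := by
    intro a c
    obtain ⟨Cb, hCb0, hCb⟩ := hBloc (|a| + |c| + 1) (by positivity)
    rw [intervalIntegrable_iff]
    apply MeasureTheory.Integrable.mono'
      (g := fun _ => Cb) (integrableOn_const measure_Ioc_lt_top.ne)
      (hBmeas.aestronglyMeasurable.restrict)
    rw [MeasureTheory.ae_restrict_iff' measurableSet_Ioc]
    filter_upwards with s hs
    exact hCb s (habs a c s hs)
  have hprim_cont : Continuous fun u => ∫ s in (0:ℝ)..u, B s := by
    rw [continuous_iff_continuousAt]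
    intro u₁
    obtain ⟨Cb, hCb0, hCb⟩ := hBloc (|u₁| + 2) (by positivity)
    apply continuousAt_of_locally_lipschitz one_pos Cb
    intro y hy
    rw [dist_eq_norm, intervalIntegral.integral_interval_sub_left (hBint 0 y) (hBint 0 u₁)]
    apply le_trans (intervalIntegral.norm_integral_le_of_norm_le_const (C := Cb) ?_)
    · rw [Real.dist_eq]
    · intro s hs
      apply hCb
      rw [Set.mem_uIoc] at hs
      rw [Real.dist_eq] at hy
      have h1 : |y| < |u₁| + 1 := by
        cases abs_cases y <;> cases abs_cases u₁ <;> cases abs_cases (y - u₁) <;> linarith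
      constructor
      · rcases hs with h | h
        · cases abs_cases u₁ <;> linarith [h.1]
        · cases abs_cases y <;> linarith [h.1, abs_nonneg u₁]
      · rcases hs with h | h
        · cases abs_cases y <;> linarith [h.2, abs_nonneg u₁]
        · cases abs_cases u₁ <;> linarith [h.2]
  have hfun : (fun u => DΩ u 0 ξ) =
      fun u => ContinuousLinearMap.id ℝ E2 + ∫ s in (0:ℝ)..u, B s :=
    funext (eta15_varInt hψ hΩinit hΩsol hDΩ ξ)
  have hDΩcont : Continuous fun u => DΩ u 0 ξ := by
    rw [hfun]; exact continuous_const.add hprim_cont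
  have hBcont : Continuous B := hAcont.mul hDΩcont
  have hder : HasDerivAt (fun u => ContinuousLinearMap.id ℝ E2 + ∫ s in (0:ℝ)..u, B s)
      (B t) t :=
    (intervalIntegral.integral_hasDerivAt_right (hBint 0 t)
      (hBcont.stronglyMeasurableAtFilter volume (nhds t)) hBcont.continuousAt).const_add _
  rw [hfun]
  exact hder

end Var2

section Formula
variable {ψ : E2 → E2} {Ω : ℝ → ℝ → E2 → E2} {DΩ : ℝ → ℝ → E2 → (E2 →L[ℝ] E2)}
  (hψ : ContDiff ℝ 2 ψ)
  (hΩinit : ∀ t₀ ξ, Ω t₀ t₀ ξ = ξ)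
  (hΩsol : ∀ t₀ ξ t, HasDerivAt (fun s => Ω s t₀ ξ) (ψ (Ω t t₀ ξ)) t)
  (hDΩ : ∀ t t₀ ξ, HasFDerivAt (Ω t t₀) (DΩ t t₀ ξ) ξ)

include hψ hΩinit hΩsol hDΩ

lemma eta15_DΩinv_left (t : ℝ) (ξ : E2) :
    (DΩ 0 t (Ω t 0 ξ)).comp (DΩ t 0 ξ) = ContinuousLinearMap.id ℝ E2 := by
  have h1 : HasFDerivAt (fun ζ => Ω 0 t (Ω t 0 ζ))
      ((DΩ 0 t (Ω t 0 ξ)).comp (DΩ t 0 ξ)) ξ :=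
    (hDΩ 0 t (Ω t 0 ξ)).comp ξ (hDΩ t 0 ξ)
  have h2 : (fun ζ => Ω 0 t (Ω t 0 ζ)) = id := by
    funext ζ; exact eta15_inv_left hψ hΩinit hΩsol t ζ
  rw [h2] at h1
  exact h1.unique (hasFDerivAt_id ξ)

lemma eta15_DΩinv_right (t : ℝ) (ξ : E2) :
    (DΩ t 0 ξ).comp (DΩ 0 t (Ω t 0 ξ)) = ContinuousLinearMap.id ℝ E2 := by
  set ζ₀ : E2 := Ω t 0 ξ with hζ₀
  have hξ : Ω 0 t ζ₀ = ξ := eta15_inv_left hψ hΩinit hΩsol t ξ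
  have h1 : HasFDerivAt (fun ζ => Ω t 0 (Ω 0 t ζ))
      ((DΩ t 0 ξ).comp (DΩ 0 t ζ₀)) ζ₀ := by
    have := (hDΩ t 0 (Ω 0 t ζ₀)).comp ζ₀ (hDΩ 0 t ζ₀)
    rwa [hξ] at this
  have h2 : (fun ζ => Ω t 0 (Ω 0 t ζ)) = id := by
    funext ζ; exact eta15_inv_right hψ hΩinit hΩsol t ζ
  rw [h2] at h1
  exact h1.unique (hasFDerivAt_id ζ₀)

/-- continuity of `τ ↦ DΩ 0 τ (Ω τ 0 ξ)` -/
lemma eta15_invCont (ξ : E2) : Continuous fun τ => DΩ 0 τ (Ω τ 0 ξ) := by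
  have hΨcont : Continuous fun τ => DΩ τ 0 ξ := by
    rw [continuous_iff_continuousAt]
    exact fun τ => (eta15_varEq hψ hΩinit hΩsol hDΩ ξ τ).continuousAt
  have hU : ∀ τ : ℝ, DΩ τ 0 ξ * DΩ 0 τ (Ω τ 0 ξ) = 1 := fun τ =>
    eta15_DΩinv_right hψ hΩinit hΩsol hDΩ τ ξ
  have hU' : ∀ τ : ℝ, DΩ 0 τ (Ω τ 0 ξ) * DΩ τ 0 ξ = 1 := fun τ =>
    eta15_DΩinv_left hψ hΩinit hΩsol hDΩ τ ξ
  have heq : (fun τ => DΩ 0 τ (Ω τ 0 ξ)) =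
      fun τ => Ring.inverse (DΩ τ 0 ξ) := by
    funext τ
    exact (Ring.inverse_unit (Units.mk (DΩ τ 0 ξ) (DΩ 0 τ (Ω τ 0 ξ)) (hU τ) (hU' τ))).symm
  rw [heq, continuous_iff_continuousAt]
  intro τ
  exact ContinuousAt.comp (g := Ring.inverse) (f := fun τ => DΩ τ 0 ξ) (x := τ)
    (NormedRing.inverse_continuousAt
      (Units.mk (DΩ τ 0 ξ) (DΩ 0 τ (Ω τ 0 ξ)) (hU τ) (hU' τ))) hΨcont.continuousAt

/-- variation-of-constants representation of `η` -/
lemma eta15_formula {φ : ℝ → E2 → E2}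
    (hφcont : Continuous fun p : ℝ × E2 => φ p.1 p.2)
    (ξ : E2) (α : ℝ) {h : ℝ → E2} (hα : h α = 0)
    (hder : ∀ t, HasDerivAt h (fderiv ℝ ψ (Ω t 0 ξ) (h t) + φ t (Ω t 0 ξ)) t)
    (t : ℝ) :
    h t = DΩ t 0 ξ (∫ τ in α..t, DΩ 0 τ (Ω τ 0 ξ) (φ τ (Ω τ 0 ξ))) := by
  have hγcont : Continuous fun τ => Ω τ 0 ξ := by
    rw [continuous_iff_continuousAt]; exact fun τ => (hΩsol 0 ξ τ).continuousAt
  set G : ℝ → E2 := fun τ => DΩ 0 τ (Ω τ 0 ξ) (φ τ (Ω τ 0 ξ)) with hGdef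
  have hGcont : Continuous G :=
    (eta15_invCont hψ hΩinit hΩsol hDΩ ξ).clm_apply
      (hφcont.comp (continuous_id.prodMk hγcont))
  set y : ℝ → E2 := fun t => DΩ t 0 ξ (∫ τ in α..t, G τ) with hydef
  have hyder : ∀ u : ℝ, HasDerivAt y
      (fderiv ℝ ψ (Ω u 0 ξ) (y u) + φ u (Ω u 0 ξ)) u := by
    intro u
    have hI : HasDerivAt (fun v => ∫ τ in α..v, G τ) (G u) u :=
      intervalIntegral.integral_hasDerivAt_right (hGcont.intervalIntegrable α u)
        (hGcont.stronglyMeasurableAtFilter volume (nhds u)) hGcont.continuousAt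
    have := (eta15_varEq hψ hΩinit hΩsol hDΩ ξ u).clm_apply hI
    refine this.congr_deriv ?_
    rw [ContinuousLinearMap.comp_apply]
    congr 1
    have := congrArg (fun (L : E2 →L[ℝ] E2) => L (φ u (Ω u 0 ξ)))
      (eta15_DΩinv_right hψ hΩinit hΩsol hDΩ u ξ)
    simpa [ContinuousLinearMap.comp_apply] using this
  -- uniqueness of solutions of the linear equation
  set w : ℝ → E2 := fun u => h u - y u with hwdef
  have hwα : w α = 0 := by
    simp only [hwdef, hydef, hα, intervalIntegral.integral_same, map_zero, sub_zero]
  have hwder : ∀ u, HasDerivAt w (fderiv ℝ ψ (Ω u 0 ξ) (w u)) u := by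
    intro u
    have := (hder u).sub (hyder u)
    simpa [hwdef, map_sub, Pi.sub_def] using this
  set a : ℝ := min α t - 1 with hadef
  set b : ℝ := max α t + 1 with hbdef
  have hab : a < b := by
    have := min_le_max (a := α) (b := t); simp only [hadef, hbdef]; linarith
  set clamp : ℝ → ℝ := fun u => max a (min b u) with hclampdef
  have hclampmem : ∀ u, clamp u ∈ Icc a b := fun u =>
    ⟨le_max_left _ _, max_le (by linarith) (min_le_left _ _)⟩
  have hclampid : ∀ u ∈ Ioo a b, clamp u = u := by
    intro u hu
    simp only [hclampdef]
    rw [min_eq_right hu.2.le, max_eq_right hu.1.le]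
  have hAcont : Continuous fun u => fderiv ℝ ψ (Ω u 0 ξ) :=
    (hψ.continuous_fderiv (by norm_num)).comp hγcont
  obtain ⟨C₂, hC₂⟩ := (isCompact_Icc (a := a) (b := b)).exists_bound_of_continuousOn
    (hAcont.continuousOn (s := Icc a b))
  have hC₂0 : 0 ≤ C₂ := le_trans (norm_nonneg _) (hC₂ a ⟨le_refl _, hab.le⟩)
  have hwcont : Continuous w := by
    rw [continuous_iff_continuousAt]; exact fun u => (hwder u).continuousAt
  have huniq := ODE_solution_unique_of_mem_Icc
    (v := fun u x => fderiv ℝ ψ (Ω (clamp u) 0 ξ) x) (s := fun _ => univ)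
    (K := C₂.toNNReal) (f := w) (g := fun _ => (0:E2))
    (fun u _ => by
      apply LipschitzOnWith.mono _ (subset_univ _)
      apply LipschitzWith.lipschitzOnWith (s := univ)
      apply (fderiv ℝ ψ (Ω (clamp u) 0 ξ)).lipschitz.weaken
      rw [← NNReal.coe_le_coe, coe_nnnorm, Real.coe_toNNReal _ hC₂0]
      exact hC₂ _ (hclampmem u))
    (show α ∈ Ioo a b from ⟨by simp only [hadef]; linarith [min_le_left α t],
      by simp only [hbdef]; linarith [le_max_left α t]⟩)
    (hwcont.continuousOn)
    (fun u hu => by simp only [hclampid u hu]; exact hwder u)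
    (fun u _ => mem_univ _)
    (continuous_const.continuousOn)
    (fun u hu => by
      have hz : (fderiv ℝ ψ (Ω (clamp u) 0 ξ)) (0:E2) = 0 := map_zero _
      simpa [hz] using hasDerivAt_const u (0 : E2))
    (fun u _ => mem_univ _)
    (by simpa using hwα)
  have hti : t ∈ Icc a b := ⟨by simp only [hadef]; linarith [min_le_right α t],
    by simp only [hbdef]; linarith [le_max_right α t]⟩
  have := huniq hti
  have hwt : w t = 0 := this
  have : h t = y t := by
    have := sub_eq_zero.mp hwt
    exact this
  exact this
end Formula


set_option maxHeartbeats 1600000 in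
/-- **Case-(15) estimate in the proof of Theorem 1.**  Let `Ω (·, t₀, ξ)` be the
flow of the planar system `ẋ = ψ(x)`, with first and second derivatives
`DΩ = Ω'₍₃₎` and `D2Ω = Ω''₍₃₎₍₃₎` with respect to the initial value, let `φ` be
continuous, `Φ(t,ξ) = Ω'₍₃₎(0,t,Ω(t,0,ξ)) φ(t, Ω(t,0,ξ))`, and let
`η(·,s,ξ)` solve `ẏ = ψ'(Ω(t,0,ξ)) y + φ(t, Ω(t,0,ξ))`, `y(s) = 0`.
Suppose `z : [0,T] → ℝ²` is continuous and satisfies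
`z(t) = Ω(T,0,z(T)) + ε ∫₀^{λ t + (1−λ) T} Φ(τ, z(τ)) dτ` on `[0,T]`, its range
lies in a convex set `S` on which `‖Φ‖ ≤ M`, `Φ` is `M'`-Lipschitz,
`‖Ω'₍₃₎(T,0,·)‖ ≤ L'` and `‖Ω''₍₃₎₍₃₎(T,0,·)‖ ≤ L''`.  If `t₀ ∈ [0,T]` is such
that `z(t₀) = Ω(T,0,z(t₀))`, then with `α = λ t₀ + (1−λ) T`,
`‖η(T,α,z(t₀)) − η(0,α,z(t₀))‖ ≤ ε T² M (M' + √2 M L'' + M' L')`. -/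
theorem eta_difference_estimate_at_fixed_point
    (ψ : EuclideanSpace ℝ (Fin 2) → EuclideanSpace ℝ (Fin 2))
    (hψ : ContDiff ℝ 2 ψ)
    (Ω : ℝ → ℝ → EuclideanSpace ℝ (Fin 2) → EuclideanSpace ℝ (Fin 2))
    (hΩinit : ∀ t₀ ξ, Ω t₀ t₀ ξ = ξ)
    (hΩsol : ∀ t₀ ξ t, HasDerivAt (fun s => Ω s t₀ ξ) (ψ (Ω t t₀ ξ)) t)
    (DΩ : ℝ → ℝ → EuclideanSpace ℝ (Fin 2) →
      (EuclideanSpace ℝ (Fin 2) →L[ℝ] EuclideanSpace ℝ (Fin 2)))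
    (hDΩ : ∀ t t₀ ξ, HasFDerivAt (Ω t t₀) (DΩ t t₀ ξ) ξ)
    (D2Ω : ℝ → ℝ → EuclideanSpace ℝ (Fin 2) →
      (EuclideanSpace ℝ (Fin 2) →L[ℝ]
        EuclideanSpace ℝ (Fin 2) →L[ℝ] EuclideanSpace ℝ (Fin 2)))
    (hD2Ω : ∀ t t₀ ξ, HasFDerivAt (fun ζ => DΩ t t₀ ζ) (D2Ω t t₀ ξ) ξ)
    (φ : ℝ → EuclideanSpace ℝ (Fin 2) → EuclideanSpace ℝ (Fin 2))
    (hφcont : Continuous fun p : ℝ × EuclideanSpace ℝ (Fin 2) => φ p.1 p.2)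
    (Φ : ℝ → EuclideanSpace ℝ (Fin 2) → EuclideanSpace ℝ (Fin 2))
    (hΦ : ∀ t ξ, Φ t ξ = DΩ 0 t (Ω t 0 ξ) (φ t (Ω t 0 ξ)))
    (η : ℝ → ℝ → EuclideanSpace ℝ (Fin 2) → EuclideanSpace ℝ (Fin 2))
    (hηinit : ∀ s ξ, η s s ξ = 0)
    (hηsol : ∀ s ξ t, HasDerivAt (fun u => η u s ξ)
      (fderiv ℝ ψ (Ω t 0 ξ) (η t s ξ) + φ t (Ω t 0 ξ)) t)
    (T ε lam : ℝ) (hT : 0 < T) (hε : 0 < ε) (hlam : lam ∈ Set.Icc (0:ℝ) 1)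
    (z : ℝ → EuclideanSpace ℝ (Fin 2))
    (hzcont : ContinuousOn z (Set.Icc 0 T))
    (hz : ∀ t ∈ Set.Icc 0 T,
      z t = Ω T 0 (z T) + ε • ∫ τ in (0:ℝ)..(lam * t + (1 - lam) * T), Φ τ (z τ))
    (S : Set (EuclideanSpace ℝ (Fin 2))) (hS : Convex ℝ S)
    (hrange : ∀ t ∈ Set.Icc 0 T, z t ∈ S)
    (M M' L' L'' : ℝ) (hM : 0 ≤ M) (hM' : 0 ≤ M') (hL' : 0 ≤ L') (hL'' : 0 ≤ L'')
    (hMbound : ∀ t ∈ Set.Icc 0 T, ∀ ξ ∈ S, ‖Φ t ξ‖ ≤ M)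
    (hM'bound : ∀ t ∈ Set.Icc 0 T, ∀ ξ ∈ S, ∀ ξ' ∈ S,
      ‖Φ t ξ - Φ t ξ'‖ ≤ M' * ‖ξ - ξ'‖)
    (hL'bound : ∀ ξ ∈ S, ‖DΩ T 0 ξ‖ ≤ L')
    (hL''bound : ∀ ξ ∈ S, ‖D2Ω T 0 ξ‖ ≤ L'')
    (t₀ : ℝ) (ht₀ : t₀ ∈ Set.Icc 0 T)
    (hfix : z t₀ = Ω T 0 (z t₀)) :
    ‖η T (lam * t₀ + (1 - lam) * T) (z t₀) -
        η 0 (lam * t₀ + (1 - lam) * T) (z t₀)‖ ≤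
      ε * T ^ 2 * M * (M' + Real.sqrt 2 * M * L'' + M' * L') := by
  set α : ℝ := lam * t₀ + (1 - lam) * T with hαdef
  set ξ : EuclideanSpace ℝ (Fin 2) := z t₀ with hξdef
  have hξS : ξ ∈ S := hrange t₀ ht₀
  have hTmem : T ∈ Icc (0:ℝ) T := ⟨hT.le, le_refl T⟩
  have hzTS : z T ∈ S := hrange T hTmem
  -- clamped z
  set cl : ℝ → ℝ := fun t => max 0 (min T t) with hcl
  have hclcont : Continuous cl := continuous_const.max (continuous_const.min continuous_id)
  have hclmem : ∀ t, cl t ∈ Icc (0:ℝ) T :=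
    fun t => ⟨le_max_left _ _, max_le hT.le (min_le_left _ _)⟩
  have hclid : ∀ t ∈ Icc (0:ℝ) T, cl t = t := fun t ht => by
    simp only [hcl]; rw [min_eq_right ht.2, max_eq_right ht.1]
  set zc : ℝ → EuclideanSpace ℝ (Fin 2) := fun t => z (cl t) with hzc
  have hzccont : Continuous zc := hzcont.comp_continuous hclcont hclmem
  have hzceq : ∀ t ∈ Icc (0:ℝ) T, zc t = z t := fun t ht => by
    simp only [hzc]; rw [hclid t ht]
  -- membership of the averaged time
  have humem : ∀ t ∈ Icc (0:ℝ) T, lam * t + (1 - lam) * T ∈ Icc (0:ℝ) T := by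
    intro t ht
    constructor
    · have h1 : 0 ≤ lam * t := mul_nonneg hlam.1 ht.1
      have h2 : 0 ≤ (1 - lam) * T := mul_nonneg (by linarith [hlam.2]) hT.le
      linarith
    · have h1 : lam * t ≤ lam * T := mul_le_mul_of_nonneg_left ht.2 hlam.1
      nlinarith [hlam.1, hlam.2]
  have hαmem : α ∈ Icc (0:ℝ) T := humem t₀ ht₀
  -- measurable integrand
  have hauto : ∀ t t₀' ξ', Ω t t₀' ξ' = Ω (t - t₀') 0 ξ' :=
    fun t t0 x => eta15_auto hψ hΩinit hΩsol t0 x t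
  have hjoint := eta15_jointCont hψ hΩinit hΩsol
  set Ft : ℝ → EuclideanSpace ℝ (Fin 2) := fun τ => Φ τ (zc τ) with hFt
  have hFtmeas : StronglyMeasurable Ft := by
    have hc : Continuous fun τ => Ω τ 0 (zc τ) :=
      hjoint.comp (continuous_id.prodMk hzccont)
    have hg : Continuous fun τ => φ τ (Ω τ 0 (zc τ)) :=
      hφcont.comp (continuous_id.prodMk hc)
    have : Ft = fun τ => DΩ 0 τ (Ω τ 0 (zc τ)) (φ τ (Ω τ 0 (zc τ))) := by
      funext τ; simp only [hFt]; rw [hΦ]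
    rw [this]
    exact eta15_measApply hjoint hauto hDΩ hc hg
  have hsubIcc : ∀ a b : ℝ, a ∈ Icc (0:ℝ) T → b ∈ Icc (0:ℝ) T → Ι a b ⊆ Icc (0:ℝ) T := by
    intro a b ha hb s hs
    rw [Set.mem_uIoc] at hs
    rcases hs with h | h
    · exact ⟨ha.1.trans h.1.le, h.2.trans hb.2⟩
    · exact ⟨hb.1.trans h.1.le, h.2.trans ha.2⟩
  have hFtbd : ∀ s ∈ Icc (0:ℝ) T, ‖Ft s‖ ≤ M := by
    intro s hs
    simp only [hFt]
    rw [hzceq s hs]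
    exact hMbound s hs (z s) (hrange s hs)
  have hFtint : ∀ a b : ℝ, a ∈ Icc (0:ℝ) T → b ∈ Icc (0:ℝ) T →
      IntervalIntegrable Ft volume a b := by
    intro a b ha hb
    rw [intervalIntegrable_iff]
    apply MeasureTheory.Integrable.mono'
      (g := fun _ => M) (integrableOn_const measure_Ioc_lt_top.ne)
      (hFtmeas.aestronglyMeasurable.restrict)
    rw [MeasureTheory.ae_restrict_iff' measurableSet_Ioc]
    filter_upwards with s hs
    exact hFtbd s (hsubIcc a b ha hb hs)
  -- rewritten fixed point equation
  have hz' : ∀ t ∈ Icc (0:ℝ) T,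
      z t = Ω T 0 (z T) + ε • ∫ τ in (0:ℝ)..(lam * t + (1 - lam) * T), Ft τ := by
    intro t ht
    rw [hz t ht]
    congr 2
    apply intervalIntegral.integral_congr
    intro s hs
    have hsmem : s ∈ Icc (0:ℝ) T := by
      rcases hs with ⟨h1, h2⟩
      have h0 : (0:ℝ) ≤ min 0 (lam * t + (1 - lam) * T) := by
        rcases humem t ht with ⟨hu1, hu2⟩; exact le_min (le_refl 0) hu1
      have hTT : max 0 (lam * t + (1 - lam) * T) ≤ T := by
        rcases humem t ht with ⟨hu1, hu2⟩; exact max_le hT.le hu2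
      exact ⟨h0.trans h1, h2.trans hTT⟩
    simp only [hFt]
    rw [hzceq s hsmem]
  -- basic difference estimate: ‖z τ - ξ‖ ≤ ε * (M * T)
  have hdiff : ∀ τ ∈ Icc (0:ℝ) T,
      z τ - ξ = ε • ∫ s in α..(lam * τ + (1 - lam) * T), Ft s := by
    intro τ hτ
    have h1 := hz' τ hτ
    have h2 := hz' t₀ ht₀
    rw [hξdef]
    calc z τ - z t₀
        = ε • ((∫ s in (0:ℝ)..(lam * τ + (1 - lam) * T), Ft s) -
            ∫ s in (0:ℝ)..α, Ft s) := by
          rw [h1, h2, smul_sub]; abel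
      _ = ε • ∫ s in α..(lam * τ + (1 - lam) * T), Ft s := by
          rw [intervalIntegral.integral_interval_sub_left
            (hFtint 0 _ ⟨le_refl 0, hT.le⟩ (humem τ hτ))
            (hFtint 0 _ ⟨le_refl 0, hT.le⟩ hαmem)]
  have hznear : ∀ τ ∈ Icc (0:ℝ) T, ‖z τ - ξ‖ ≤ ε * (M * T) := by
    intro τ hτ
    rw [hdiff τ hτ, norm_smul, Real.norm_eq_abs, abs_of_pos hε]
    apply mul_le_mul_of_nonneg_left _ hε.le
    have hb := humem τ hτ
    apply le_trans (intervalIntegral.norm_integral_le_of_norm_le_const (C := M)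
      (fun s hs => hFtbd s (hsubIcc _ _ hαmem hb hs)))
    apply mul_le_mul_of_nonneg_left _ hM
    have : |lam * τ + (1 - lam) * T - α| = lam * |τ - t₀| := by
      rw [hαdef, show lam * τ + (1 - lam) * T - (lam * t₀ + (1 - lam) * T)
        = lam * (τ - t₀) by ring, abs_mul, abs_of_nonneg hlam.1]
    rw [this]
    have h1 : |τ - t₀| ≤ T := by
      rw [abs_le]
      constructor
      · linarith [hτ.1, ht₀.2]
      · linarith [hτ.2, ht₀.1]
    nlinarith [hlam.1, hlam.2, abs_nonneg (τ - t₀)]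
  -- the fixed integrand G
  set G : ℝ → EuclideanSpace ℝ (Fin 2) := fun τ => Φ τ ξ with hG
  have hGrw : G = fun τ => DΩ 0 τ (Ω τ 0 ξ) (φ τ (Ω τ 0 ξ)) := by
    funext τ; simp only [hG]; rw [hΦ]
  have hγcont : Continuous fun τ => Ω τ 0 ξ := by
    rw [continuous_iff_continuousAt]; exact fun τ => (hΩsol 0 ξ τ).continuousAt
  have hGcont : Continuous G := by
    rw [hGrw]
    exact (eta15_invCont hψ hΩinit hΩsol hDΩ ξ).clm_apply
      (hφcont.comp (continuous_id.prodMk hγcont))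
  -- the representation formula for η
  have hrep : ∀ t : ℝ, η t α ξ = DΩ t 0 ξ (∫ τ in α..t, G τ) := by
    intro t
    rw [hGrw]
    exact eta15_formula hψ hΩinit hΩsol hDΩ hφcont ξ α (hηinit α ξ) (hηsol α ξ) t
  have hDΩ00 : DΩ 0 0 ξ = ContinuousLinearMap.id ℝ (EuclideanSpace ℝ (Fin 2)) := by
    have h1 : (fun ζ => Ω 0 0 ζ) = id := funext fun ζ => hΩinit 0 ζ
    have := hDΩ 0 0 ξ
    rw [show Ω 0 0 = id from h1] at this
    exact this.unique (hasFDerivAt_id ξ)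
  have hsplit : η T α ξ - η 0 α ξ =
      DΩ T 0 ξ (∫ τ in α..T, G τ) + ∫ τ in (0:ℝ)..α, G τ := by
    rw [hrep T, hrep 0, hDΩ00]
    simp only [ContinuousLinearMap.coe_id', id_eq]
    rw [intervalIntegral.integral_symm α 0]
    abel
  -- scaled target
  have hGint : ∀ a b : ℝ, IntervalIntegrable G volume a b := fun a b =>
    hGcont.intervalIntegrable a b
  have hGFbd : ∀ s ∈ Icc (0:ℝ) T, ‖G s - Ft s‖ ≤ M' * (ε * (M * T)) := by
    intro s hs
    simp only [hG, hFt]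
    rw [hzceq s hs]
    apply le_trans (hM'bound s hs ξ hξS (z s) (hrange s hs))
    apply mul_le_mul_of_nonneg_left _ hM'
    rw [norm_sub_rev]
    exact hznear s hs
  -- ε-scaled pieces
  have hI1 : ε • ∫ τ in (0:ℝ)..α, Ft τ = ξ - Ω T 0 (z T) := by
    have := hz' t₀ ht₀
    rw [hξdef, this]; abel
  have hI2 : ε • ∫ τ in α..T, Ft τ = z T - ξ := by
    have := hdiff T hTmem
    rw [show lam * T + (1 - lam) * T = T by ring] at this
    rw [← this]
  have hsum : ε • (η T α ξ - η 0 α ξ) =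
      (ε • ∫ τ in (0:ℝ)..α, (G τ - Ft τ)) +
      (DΩ T 0 ξ (ε • ∫ τ in α..T, (G τ - Ft τ))) +
      (Ω T 0 ξ - Ω T 0 (z T) - DΩ T 0 ξ (ξ - z T)) := by
    have e2 : (∫ τ in α..T, G τ) =
        (∫ τ in α..T, (G τ - Ft τ)) + ∫ τ in α..T, Ft τ := by
      rw [intervalIntegral.integral_sub (hGint α T) (hFtint α T hαmem hTmem)]; abel
    have e1 : (∫ τ in (0:ℝ)..α, G τ) =
        (∫ τ in (0:ℝ)..α, (G τ - Ft τ)) + ∫ τ in (0:ℝ)..α, Ft τ := by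
      rw [intervalIntegral.integral_sub (hGint 0 α) (hFtint 0 α ⟨le_refl 0, hT.le⟩ hαmem)]
      abel
    have hfix' : Ω T 0 ξ = ξ := hfix.symm
    rw [hsplit, e1, e2, map_add, smul_add, smul_add, smul_add]
    rw [show ε • DΩ T 0 ξ (∫ τ in α..T, (G τ - Ft τ))
        = DΩ T 0 ξ (ε • ∫ τ in α..T, (G τ - Ft τ)) from
      (ContinuousLinearMap.map_smul _ _ _).symm]
    rw [show ε • DΩ T 0 ξ (∫ τ in α..T, Ft τ)
        = DΩ T 0 ξ (ε • ∫ τ in α..T, Ft τ) from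
      (ContinuousLinearMap.map_smul _ _ _).symm]
    rw [hI1, hI2, map_sub (DΩ T 0 ξ) (z T) ξ, map_sub (DΩ T 0 ξ) ξ (z T), hfix']
    abel
  -- norm estimates
  have hnormIcc : ∀ (a b : ℝ), a ∈ Icc (0:ℝ) T → b ∈ Icc (0:ℝ) T → |b - a| ≤ T → True := fun _ _ _ _ _ => trivial
  have hnorm1 : ‖ε • ∫ τ in (0:ℝ)..α, (G τ - Ft τ)‖ ≤ ε * (M' * (ε * (M * T)) * T) := by
    rw [norm_smul, Real.norm_eq_abs, abs_of_pos hε]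
    apply mul_le_mul_of_nonneg_left _ hε.le
    apply le_trans (intervalIntegral.norm_integral_le_of_norm_le_const
      (C := M' * (ε * (M * T)))
      (fun s hs => hGFbd s (hsubIcc 0 α ⟨le_refl 0, hT.le⟩ hαmem hs)))
    apply mul_le_mul_of_nonneg_left _ (by positivity)
    rw [sub_zero, abs_of_nonneg hαmem.1]
    exact hαmem.2
  have hnorm2in : ‖ε • ∫ τ in α..T, (G τ - Ft τ)‖ ≤ ε * (M' * (ε * (M * T)) * T) := by
    rw [norm_smul, Real.norm_eq_abs, abs_of_pos hε]
    apply mul_le_mul_of_nonneg_left _ hε.le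
    apply le_trans (intervalIntegral.norm_integral_le_of_norm_le_const
      (C := M' * (ε * (M * T)))
      (fun s hs => hGFbd s (hsubIcc α T hαmem hTmem hs)))
    apply mul_le_mul_of_nonneg_left _ (by positivity)
    rw [abs_of_nonneg (by linarith [hαmem.1, hαmem.2] : (0:ℝ) ≤ T - α)]
    linarith [hαmem.1]
  have hnorm2 : ‖DΩ T 0 ξ (ε • ∫ τ in α..T, (G τ - Ft τ))‖ ≤
      L' * (ε * (M' * (ε * (M * T)) * T)) := by
    apply le_trans (ContinuousLinearMap.le_opNorm _ _)
    exact mul_le_mul (hL'bound ξ hξS) hnorm2in (norm_nonneg _) hL'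
  have hzT1 : ‖z T - ξ‖ ≤ ε * (M * T) := hznear T hTmem
  have hTaylor : ‖Ω T 0 ξ - Ω T 0 (z T) - DΩ T 0 ξ (ξ - z T)‖ ≤
      L'' * (ε * (M * T)) ^ 2 := by
    have hlipD : ∀ x ∈ S, ‖DΩ T 0 x - DΩ T 0 ξ‖ ≤ L'' * ‖x - ξ‖ := by
      intro x hx
      exact Convex.norm_image_sub_le_of_norm_hasFDerivWithin_le
        (f := fun y => DΩ T 0 y) (f' := fun y => D2Ω T 0 y) (s := S)
        (fun y hy => (hD2Ω T 0 y).hasFDerivWithinAt)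
        (fun y hy => hL''bound y hy) hS hξS hx
    have hsegS : segment ℝ ξ (z T) ⊆ S := hS.segment_subset hξS hzTS
    have hsegbd : ∀ x ∈ segment ℝ ξ (z T), ‖x - ξ‖ ≤ ‖z T - ξ‖ := by
      rintro x ⟨a, b, ha, hb, hab, rfl⟩
      have hx : a • ξ + b • z T - ξ = b • (z T - ξ) := by
        rw [show a = 1 - b by linarith, sub_smul, one_smul, smul_sub]
        abel
      rw [hx, norm_smul, Real.norm_eq_abs, abs_of_nonneg hb]
      nlinarith [norm_nonneg (z T - ξ)]
    have key := Convex.norm_image_sub_le_of_norm_hasFDerivWithin_le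
      (f := fun y => Ω T 0 y - DΩ T 0 ξ y) (f' := fun y => DΩ T 0 y - DΩ T 0 ξ)
      (s := segment ℝ ξ (z T)) (C := L'' * ‖z T - ξ‖)
      (fun y _ => ((hDΩ T 0 y).sub (DΩ T 0 ξ).hasFDerivAt).hasFDerivWithinAt)
      (fun y hy => le_trans (hlipD y (hsegS hy))
        (mul_le_mul_of_nonneg_left (hsegbd y hy) hL''))
      (convex_segment _ _) (left_mem_segment ℝ ξ (z T)) (right_mem_segment ℝ ξ (z T))
    have heq : Ω T 0 ξ - Ω T 0 (z T) - DΩ T 0 ξ (ξ - z T) =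
        -((Ω T 0 (z T) - DΩ T 0 ξ (z T)) - (Ω T 0 ξ - DΩ T 0 ξ ξ)) := by
      rw [map_sub (DΩ T 0 ξ) ξ (z T)]
      abel
    rw [heq, norm_neg]
    apply le_trans key
    have h0 : (0:ℝ) ≤ ‖z T - ξ‖ := norm_nonneg _
    have h1 : (0:ℝ) ≤ ε * (M * T) := by positivity
    nlinarith [mul_le_mul hzT1 hzT1 h0 h1]
  -- combine
  have hcomb : ε * ‖η T α ξ - η 0 α ξ‖ ≤
      ε * (ε * T ^ 2 * M * (M' + M * L'' + M' * L')) := by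
    have hL : ε * ‖η T α ξ - η 0 α ξ‖ = ‖ε • (η T α ξ - η 0 α ξ)‖ := by
      rw [norm_smul, Real.norm_eq_abs, abs_of_pos hε]
    rw [hL, hsum]
    apply le_trans (norm_add₃_le)
    have := add_le_add (add_le_add hnorm1 hnorm2) hTaylor
    apply le_trans this
    apply le_of_eq
    ring
  have hmain : ‖η T α ξ - η 0 α ξ‖ ≤ ε * T ^ 2 * M * (M' + M * L'' + M' * L') :=
    le_of_mul_le_mul_left hcomb hε
  apply le_trans hmain
  have hsqrt : (1:ℝ) ≤ Real.sqrt 2 := by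
    rw [show (1:ℝ) = Real.sqrt 1 from (Real.sqrt_one).symm]
    exact Real.sqrt_le_sqrt (by norm_num)
  have hfactor : M' + M * L'' + M' * L' ≤ M' + Real.sqrt 2 * M * L'' + M' * L' := by
    nlinarith [mul_nonneg hM hL'']
  apply mul_le_mul_of_nonneg_left hfactor (by positivity)
end

section
/- For all s ∈ [0, 4π] and θ ∈ [0, 2π], ⟨ ∫_{s−4π+θ}^{s+θ} A(τ) φ₀(τ−θ, (sin τ, cos τ)) dτ, (sin θ, cos θ) ⟩ = 4π sin²θ + cos²θ · ∫_{s−4π+θ}^{s+θ} e^{2τ} dτ, and in particular this quantity is strictly positive. (integral computation verifying condition (B₂) in the Example section) -/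
open scoped RealInnerProductSpace

/-- The matrix `A(τ)` with rows `(cos τ, −sin τ)` and `(e^{2τ} sin τ, e^{2τ} cos τ)`. -/
noncomputable def Amat (τ : ℝ) : Matrix (Fin 2) (Fin 2) ℝ :=
  !![Real.cos τ, -Real.sin τ;
     Real.exp (2 * τ) * Real.sin τ, Real.exp (2 * τ) * Real.cos τ]

/-- The matrix `B(ξ)` with rows `(ξ₂, ξ₁)` and `(−ξ₁, ξ₂)`. -/
noncomputable def Bmat (ξ : EuclideanSpace ℝ (Fin 2)) : Matrix (Fin 2) (Fin 2) ℝ :=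
  !![ξ 1, ξ 0; -(ξ 0), ξ 1]

/-- The perturbation `φ₀(t, ξ) = B(ξ) (ξ₁ cos t − ξ₂ sin t, ξ₁ sin t + ξ₂ cos t)`. -/
noncomputable def phi0 (t : ℝ) (ξ : EuclideanSpace ℝ (Fin 2)) :
    EuclideanSpace ℝ (Fin 2) :=
  WithLp.toLp 2 ((Bmat ξ).mulVec
    ![ξ 0 * Real.cos t - ξ 1 * Real.sin t, ξ 0 * Real.sin t + ξ 1 * Real.cos t])

/-- A 2×2 real matrix acting on `ℝ²` (Euclidean). -/
noncomputable def mulVecE (M : Matrix (Fin 2) (Fin 2) ℝ)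
    (v : EuclideanSpace ℝ (Fin 2)) : EuclideanSpace ℝ (Fin 2) := WithLp.toLp 2 (M.mulVec v)

noncomputable def auxE0 (θ : ℝ) : EuclideanSpace ℝ (Fin 2) := WithLp.toLp 2 ![Real.sin θ, 0]
noncomputable def auxE1 (θ : ℝ) : EuclideanSpace ℝ (Fin 2) := WithLp.toLp 2 ![0, Real.cos θ]

lemma integrand_eq (θ τ : ℝ) :
    mulVecE (Amat τ) (phi0 (τ - θ) (WithLp.toLp 2 ![Real.sin τ, Real.cos τ] : EuclideanSpace ℝ (Fin 2)))
      = auxE0 θ + Real.exp (2 * τ) • auxE1 θ := by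
  ext i
  fin_cases i
  · simp [mulVecE, Amat, phi0, Bmat, auxE0, auxE1, Matrix.mulVec, dotProduct,
      Fin.sum_univ_two, Real.sin_sub, Real.cos_sub]
    linear_combination (Real.sin θ * (Real.sin τ ^ 2 + Real.cos τ ^ 2 + 1)) *
      Real.sin_sq_add_cos_sq τ
  · simp [mulVecE, Amat, phi0, Bmat, auxE0, auxE1, Matrix.mulVec, dotProduct,
      Fin.sum_univ_two, Real.sin_sub, Real.cos_sub]
    linear_combination (Real.exp (2 * τ) * Real.cos θ * (Real.sin τ ^ 2 + Real.cos τ ^ 2 + 1)) *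
      Real.sin_sq_add_cos_sq τ

/-- **Integral computation verifying condition (B₂) in the Example section.**
For all `s ∈ [0, 4π]` and `θ ∈ [0, 2π]`,
`⟨∫_{s−4π+θ}^{s+θ} A(τ) φ₀(τ−θ, (sin τ, cos τ)) dτ, (sin θ, cos θ)⟩
  = 4π sin²θ + cos²θ ∫_{s−4π+θ}^{s+θ} e^{2τ} dτ > 0`. -/
theorem example_B2_integral_computation :
    ∀ s ∈ Set.Icc (0 : ℝ) (4 * Real.pi), ∀ θ ∈ Set.Icc (0 : ℝ) (2 * Real.pi),
      (⟪∫ τ in (s - 4 * Real.pi + θ)..(s + θ),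
          mulVecE (Amat τ)
            (phi0 (τ - θ) (WithLp.toLp 2 ![Real.sin τ, Real.cos τ] : EuclideanSpace ℝ (Fin 2))),
        (WithLp.toLp 2 ![Real.sin θ, Real.cos θ] : EuclideanSpace ℝ (Fin 2))⟫ =
        4 * Real.pi * Real.sin θ ^ 2 +
          Real.cos θ ^ 2 *
            ∫ τ in (s - 4 * Real.pi + θ)..(s + θ), Real.exp (2 * τ)) ∧
      0 < ⟪∫ τ in (s - 4 * Real.pi + θ)..(s + θ),
          mulVecE (Amat τ)
            (phi0 (τ - θ) (WithLp.toLp 2 ![Real.sin τ, Real.cos τ] : EuclideanSpace ℝ (Fin 2))),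
        (WithLp.toLp 2 ![Real.sin θ, Real.cos θ] : EuclideanSpace ℝ (Fin 2))⟫ := by
  intro s hs θ hθ
  set a := s - 4 * Real.pi + θ
  set b := s + θ
  have hab : a < b := by
    have := Real.pi_pos
    simp only [a, b]; linarith
  have hexpcont : Continuous fun τ : ℝ => Real.exp (2 * τ) :=
    Real.continuous_exp.comp (continuous_const.mul continuous_id)
  have hI1 : IntervalIntegrable (fun _ : ℝ => auxE0 θ) MeasureTheory.volume a b :=
    intervalIntegrable_const
  have hI2 : IntervalIntegrable (fun τ : ℝ => Real.exp (2 * τ) • auxE1 θ)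
      MeasureTheory.volume a b :=
    (hexpcont.smul continuous_const).intervalIntegrable a b
  have hE : ∫ τ in a..b, Real.exp (2 * τ) =
      (Real.exp (2 * b) - Real.exp (2 * a)) / 2 := by
    have : ∀ x ∈ Set.uIcc a b, HasDerivAt (fun τ => Real.exp (2 * τ) / 2)
        (Real.exp (2 * x)) x := by
      intro x _
      have h := ((hasDerivAt_id x).const_mul 2).exp
      simpa [mul_comm, mul_div_assoc] using h.div_const 2
    rw [intervalIntegral.integral_eq_sub_of_hasDerivAt this
      (hexpcont.intervalIntegrable a b)]
    ring
  have hEpos : 0 < ∫ τ in a..b, Real.exp (2 * τ) := by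
    rw [hE]
    have := Real.exp_lt_exp.mpr (by linarith : 2 * a < 2 * b)
    linarith
  have hIntEq : (∫ τ in a..b,
      mulVecE (Amat τ)
        (phi0 (τ - θ) (WithLp.toLp 2 ![Real.sin τ, Real.cos τ] : EuclideanSpace ℝ (Fin 2))))
      = (b - a) • auxE0 θ + (∫ τ in a..b, Real.exp (2 * τ)) • auxE1 θ := by
    simp only [integrand_eq θ]
    rw [intervalIntegral.integral_add hI1 hI2, intervalIntegral.integral_const,
      intervalIntegral.integral_smul_const]
  have hba : b - a = 4 * Real.pi := by simp only [a, b]; ring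
  have hmain : ⟪∫ τ in a..b,
      mulVecE (Amat τ)
        (phi0 (τ - θ) (WithLp.toLp 2 ![Real.sin τ, Real.cos τ] : EuclideanSpace ℝ (Fin 2))),
      (WithLp.toLp 2 ![Real.sin θ, Real.cos θ] : EuclideanSpace ℝ (Fin 2))⟫ =
      4 * Real.pi * Real.sin θ ^ 2 +
        Real.cos θ ^ 2 * ∫ τ in a..b, Real.exp (2 * τ) := by
    rw [hIntEq, hba]
    simp [inner_add_left, real_inner_smul_left, PiLp.inner_apply, Fin.sum_univ_two,
      auxE0, auxE1, PiLp.toLp_apply]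
    ring
  refine ⟨hmain, ?_⟩
  rw [hmain]
  have hpi := Real.pi_pos
  have h1 : 0 ≤ Real.cos θ ^ 2 * ∫ τ in a..b, Real.exp (2 * τ) :=
    mul_nonneg (sq_nonneg _) hEpos.le
  by_cases hS : Real.sin θ = 0
  · have hc : Real.cos θ ^ 2 = 1 := by
      have := Real.sin_sq_add_cos_sq θ; rw [hS] at this; linarith
    rw [hS, hc]; simpa using hEpos
  · have : 0 < 4 * Real.pi * Real.sin θ ^ 2 := by positivity
    linarith
end
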